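/- Let f(x) = 1/(x log b) · 1_{(1,b)}(x) with b > 1, and let h be the density of X − Y where X, Y are independent with density f. Then for 0 < x < b−1, h(x) = (1/(x log² b)) · log((b−x)(x+1)/b), and h(0) = (1 − 1/b)/log² b. -/

import Mathlib

open MeasureTheory Real

private lemma aux1 (b : ℝ) (hb : 1 < b) (x : ℝ) (hx : 0 < x) (hxb : x < b - 1) :
    (∫ y, (if 1 < x + y ∧ x + y < b then 1 / ((x+y) * Real.log b) else 0) *
      (if 1 < y ∧ y < b then 1 / (y * Real.log b) else 0))
    = 1 / (x * (Real.log b) ^ 2) * Real.log ((b - x) * (x + 1) / b) := by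
  set L := Real.log b with hL
  have hL0 : 0 < L := Real.log_pos hb
  have hbx : 1 < b - x := by linarith
  have heq : (fun y => (if 1 < x + y ∧ x + y < b then 1 / ((x+y) * L) else 0) *
      (if 1 < y ∧ y < b then 1 / (y * L) else 0))
      = Set.indicator (Set.Ioo 1 (b-x)) (fun y => (1/L^2) * (1/(y*(x+y)))) := by
    funext y
    by_cases hy : 1 < y ∧ y < b - x
    · rw [Set.indicator_of_mem (Set.mem_Ioo.2 hy)]
      rw [if_pos ⟨by linarith [hy.1], by linarith [hy.2]⟩,
        if_pos ⟨hy.1, by linarith [hy.2]⟩]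
      field_simp
    · rw [Set.indicator_of_notMem (by simpa [Set.mem_Ioo] using hy)]
      push_neg at hy
      rcases le_or_gt y 1 with h1 | h1
      · rw [if_neg (show ¬(1 < y ∧ y < b) by rintro ⟨h, _⟩; linarith), mul_zero]
      · have h2 : b - x ≤ y := hy h1
        rw [if_neg (show ¬(1 < x + y ∧ x + y < b) by rintro ⟨_, h⟩; linarith), zero_mul]
  rw [heq, MeasureTheory.integral_indicator measurableSet_Ioo,
    ← MeasureTheory.integral_Ioc_eq_integral_Ioo,
    ← intervalIntegral.integral_of_le hbx.le,
    intervalIntegral.integral_const_mul]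
  have hderiv : ∀ y ∈ Set.uIcc (1:ℝ) (b-x), HasDerivAt
      (fun y => x⁻¹ * (Real.log y - Real.log (x+y))) (1/(y*(x+y))) y := by
    intro y hy
    rw [Set.uIcc_of_le hbx.le] at hy
    have hy0 : (0:ℝ) < y := by linarith [hy.1]
    have hxy0 : (0:ℝ) < x + y := by linarith
    have h1 : HasDerivAt (fun y : ℝ => Real.log y) y⁻¹ y := Real.hasDerivAt_log hy0.ne'
    have h2 : HasDerivAt (fun y : ℝ => Real.log (x + y)) (x+y)⁻¹ y := by
      have := (Real.hasDerivAt_log hxy0.ne').comp y ((hasDerivAt_id y).const_add x)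
      simpa [Function.comp_def] using this
    have := ((h1.sub h2).const_mul x⁻¹)
    refine this.congr_deriv ?_
    field_simp
    ring
  have hcont : ContinuousOn (fun y : ℝ => 1/(y*(x+y))) (Set.uIcc (1:ℝ) (b-x)) := by
    rw [Set.uIcc_of_le hbx.le]
    apply ContinuousOn.div continuousOn_const
    · fun_prop
    · intro y hy
      have hy0 : (0:ℝ) < y := by linarith [hy.1]
      have : (0:ℝ) < x + y := by linarith
      positivity
  rw [intervalIntegral.integral_eq_sub_of_hasDerivAt hderiv hcont.intervalIntegrable]
  have hb0 : (0:ℝ) < b := by linarith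
  have hbx0 : (0:ℝ) < b - x := by linarith
  have hx1 : (0:ℝ) < x + 1 := by linarith
  rw [Real.log_div (by positivity) hb0.ne', Real.log_mul hbx0.ne' hx1.ne']
  have e1 : x + (b - x) = b := by ring
  simp only [e1, Real.log_one]
  field_simp
  ring

private lemma aux2 (b : ℝ) (hb : 1 < b) :
    (∫ y, (if 1 < (0:ℝ) + y ∧ (0:ℝ) + y < b then 1 / (((0:ℝ)+y) * Real.log b) else 0) *
      (if 1 < y ∧ y < b then 1 / (y * Real.log b) else 0))
    = (1 - 1 / b) / (Real.log b) ^ 2 := by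
  set L := Real.log b with hL
  have hL0 : 0 < L := Real.log_pos hb
  have heq : (fun y => (if 1 < (0:ℝ) + y ∧ (0:ℝ) + y < b then 1 / (((0:ℝ)+y) * L) else 0) *
      (if 1 < y ∧ y < b then 1 / (y * L) else 0))
      = Set.indicator (Set.Ioo 1 b) (fun y => (1/L^2) * (y^2)⁻¹) := by
    funext y
    by_cases hy : 1 < y ∧ y < b
    · rw [Set.indicator_of_mem (Set.mem_Ioo.2 hy)]
      rw [if_pos ⟨by linarith [hy.1], by linarith [hy.2]⟩, if_pos hy]
      have : (0:ℝ) < y := by linarith [hy.1]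
      field_simp
      ring
    · rw [Set.indicator_of_notMem (by simpa [Set.mem_Ioo] using hy)]
      rw [if_neg (show ¬(1 < y ∧ y < b) from hy), mul_zero]
  rw [heq, MeasureTheory.integral_indicator measurableSet_Ioo,
    ← MeasureTheory.integral_Ioc_eq_integral_Ioo,
    ← intervalIntegral.integral_of_le hb.le,
    intervalIntegral.integral_const_mul]
  have hderiv : ∀ y ∈ Set.uIcc (1:ℝ) b, HasDerivAt (fun y : ℝ => -y⁻¹) ((y^2)⁻¹) y := by
    intro y hy
    rw [Set.uIcc_of_le hb.le] at hy
    have hy0 : (0:ℝ) < y := by linarith [hy.1]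
    simpa [Pi.neg_def] using (hasDerivAt_inv hy0.ne').neg
  have hcont : ContinuousOn (fun y : ℝ => (y^2)⁻¹) (Set.uIcc (1:ℝ) b) := by
    rw [Set.uIcc_of_le hb.le]
    apply ContinuousOn.inv₀ (by fun_prop)
    intro y hy
    have hy0 : (0:ℝ) < y := by linarith [hy.1]
    positivity
  rw [intervalIntegral.integral_eq_sub_of_hasDerivAt hderiv hcont.intervalIntegrable]
  have hb0 : (0:ℝ) < b := by linarith
  field_simp
  ring

/-- Formula for the density of `X − Y` where `X, Y` are i.i.d. truncated Pareto. -/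
theorem stmt_7 (b : ℝ) (hb : 1 < b)
    (f : ℝ → ℝ)
    (hf : f = fun x => if 1 < x ∧ x < b then 1 / (x * Real.log b) else 0)
    (h : ℝ → ℝ) (hh : h = fun x => ∫ y, f (x + y) * f y) :
    (∀ x, 0 < x → x < b - 1 →
        h x = 1 / (x * (Real.log b) ^ 2) * Real.log ((b - x) * (x + 1) / b)) ∧
    h 0 = (1 - 1 / b) / (Real.log b) ^ 2 := by
  subst hf hh
  exact ⟨fun x hx hxb => aux1 b hb x hx hxb, aux2 b hb⟩
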